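/- Let H be a real inner product space and let ℓ̄, ℓ̂ : H → ℝ be convex differentiable functions whose gradients are bounded in norm by G everywhere. Fix step sizes η > 0 and γ > 0, a point w₀ ∈ H, and define w' = w₀ − η·∇ℓ̄(w₀) and w₁ = w' − γ·∇ℓ̂(w'). Then for every u ∈ H: ℓ̄(w₀) − ℓ̄(u) ≤ (‖w₀ − u‖² − ‖w₁ − u‖²)/(2η) + G²(η + γ)²/(2η) − (γ/η)·⟨∇ℓ̂(w'), w₀ − u⟩. -/

import Mathlib

open scoped RealInnerProductSpace

lemma convex_gradient_ineq
    {H : Type*} [NormedAddCommGroup H] [InnerProductSpace ℝ H] [CompleteSpace H]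
    (f : H → ℝ) (hc : ConvexOn ℝ Set.univ f) (hd : Differentiable ℝ f) (x y : H) :
    f x - f y ≤ ⟪gradient f x, x - y⟫ := by
  set v := y - x with hv
  have hline : ∀ t : ℝ, (AffineMap.lineMap x y : ℝ →ᵃ[ℝ] H) t = x + t • v := by
    intro t; simp [AffineMap.lineMap_apply, hv, add_comm]
  have hφc : ConvexOn ℝ Set.univ (fun t : ℝ => f (x + t • v)) := by
    have := hc.comp_affineMap (AffineMap.lineMap x y : ℝ →ᵃ[ℝ] H)
    have hpre : (AffineMap.lineMap x y : ℝ →ᵃ[ℝ] H) ⁻¹' Set.univ = Set.univ := by simp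
    rw [hpre] at this
    have heq : (fun t : ℝ => f (x + t • v)) = f ∘ ⇑(AffineMap.lineMap x y : ℝ →ᵃ[ℝ] H) := by
      funext t; simp [hline t]
    rw [heq]; exact this
  have hfd : HasFDerivAt f (InnerProductSpace.toDual ℝ H (gradient f x)) x :=
    (hasGradientAt_iff_hasFDerivAt).mp (hd x).hasGradientAt
  have hg : HasDerivAt (fun t : ℝ => x + t • v) v 0 := by
    simpa using ((hasDerivAt_id (0 : ℝ)).smul_const v).const_add x
  have hfd' : HasFDerivAt f (InnerProductSpace.toDual ℝ H (gradient f x))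
      (x + (0:ℝ) • v) := by simpa using hfd
  have hφd : HasDerivAt (fun t : ℝ => f (x + t • v)) (⟪gradient f x, v⟫) 0 := by
    have := (hd (x + (0:ℝ) • v)).hasFDerivAt.comp_hasDerivAt (x := (0 : ℝ)) (f := fun t : ℝ => x + t • v) (by simpa [add_comm] using hg)
    refine this.congr_deriv ?_
    rw [zero_smul, add_zero, gradient, InnerProductSpace.toDual_symm_apply]
  have hslope := hφc.le_slope_of_hasDerivAt (x := (0:ℝ)) (y := (1:ℝ))
    (Set.mem_univ _) (Set.mem_univ _) one_pos hφd
  have : ⟪gradient f x, v⟫ ≤ f y - f x := by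
    simpa [slope, hv] using hslope
  have hs : (⟪gradient f x, x - y⟫ : ℝ) = -⟪gradient f x, v⟫ := by
    rw [hv, ← inner_neg_right]
    congr 1; abel
  rw [hs]; linarith

theorem aogd_per_iteration_inequality
    {H : Type*} [NormedAddCommGroup H] [InnerProductSpace ℝ H] [CompleteSpace H]
    (ℓbar ℓhat : H → ℝ) (G : ℝ)
    (hbar_cvx : ConvexOn ℝ Set.univ ℓbar) (hhat_cvx : ConvexOn ℝ Set.univ ℓhat)
    (hbar_diff : Differentiable ℝ ℓbar) (hhat_diff : Differentiable ℝ ℓhat)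
    (hbar_grad : ∀ w : H, ‖gradient ℓbar w‖ ≤ G)
    (hhat_grad : ∀ w : H, ‖gradient ℓhat w‖ ≤ G)
    (η γ : ℝ) (hη : 0 < η) (hγ : 0 < γ)
    (w₀ w' w₁ : H)
    (hw' : w' = w₀ - η • gradient ℓbar w₀)
    (hw₁ : w₁ = w' - γ • gradient ℓhat w')
    (u : H) :
    ℓbar w₀ - ℓbar u ≤
      (‖w₀ - u‖ ^ 2 - ‖w₁ - u‖ ^ 2) / (2 * η) + G ^ 2 * (η + γ) ^ 2 / (2 * η)
        - (γ / η) * ⟪gradient ℓhat w', w₀ - u⟫ := by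
  set g := gradient ℓbar w₀ with hg
  set h := gradient ℓhat w' with hh
  have key : ℓbar w₀ - ℓbar u ≤ ⟪g, w₀ - u⟫ :=
    convex_gradient_ineq ℓbar hbar_cvx hbar_diff w₀ u
  have hGnn : 0 ≤ G := le_trans (norm_nonneg _) (hbar_grad w₀)
  have hnorm : ‖η • g + γ • h‖ ≤ G * (η + γ) := by
    calc ‖η • g + γ • h‖ ≤ ‖η • g‖ + ‖γ • h‖ := norm_add_le _ _
    _ = η * ‖g‖ + γ * ‖h‖ := by
        rw [norm_smul, norm_smul, Real.norm_eq_abs, Real.norm_eq_abs,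
          abs_of_pos hη, abs_of_pos hγ]
    _ ≤ η * G + γ * G := by
        gcongr
        exacts [hbar_grad w₀, hhat_grad w']
    _ = G * (η + γ) := by ring
  have hsq : ‖η • g + γ • h‖ ^ 2 ≤ G ^ 2 * (η + γ) ^ 2 := by
    have := pow_le_pow_left₀ (norm_nonneg _) hnorm 2
    calc ‖η • g + γ • h‖ ^ 2 ≤ (G * (η + γ)) ^ 2 := this
    _ = G ^ 2 * (η + γ) ^ 2 := by ring
  have hw₁u : w₁ - u = (w₀ - u) - (η • g + γ • h) := by
    rw [hw₁, hw']; abel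
  have hexp : ‖w₁ - u‖ ^ 2
      = ‖w₀ - u‖ ^ 2 - 2 * ⟪w₀ - u, η • g + γ • h⟫ + ‖η • g + γ • h‖ ^ 2 := by
    rw [hw₁u]; exact norm_sub_sq_real _ _
  have hinner : (⟪w₀ - u, η • g + γ • h⟫ : ℝ)
      = η * ⟪g, w₀ - u⟫ + γ * ⟪h, w₀ - u⟫ := by
    rw [inner_add_right, real_inner_smul_right, real_inner_smul_right,
      real_inner_comm _ g, real_inner_comm _ h]
  have h2η : (0:ℝ) < 2 * η := by linarith
  have hdd : γ / η * (2 * η) = 2 * γ := by field_simp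
  rw [← add_div, le_sub_iff_add_le, le_div_iff₀ h2η]
  have hdd2 : γ / η * ⟪h, w₀ - u⟫ * (2 * η) = 2 * γ * ⟪h, w₀ - u⟫ := by
    field_simp
  nlinarith [mul_le_mul_of_nonneg_right key h2η.le, hsq, hexp, hinner, hdd2]
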